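/- Let H = (1/√2)·!![1, 1; 1, −1] be the 2×2 Hadamard matrix over ℂ, M₁ = !![0, 0; 0, 1] the projection onto |1⟩, and ρ₀ = !![0, 0; 0, 1]. Define the map T on 2×2 complex matrices by T(ρ) = H (M₁ ρ M₁) H. Then both families k ↦ tr(T^k(ρ₀)) and k ↦ tr(M₁ T^k(ρ₀) M₁) of nonnegative reals are summable, and Σ_{k=0}^∞ tr(T^k(ρ₀)) + Σ_{k=0}^∞ tr(M₁ T^k(ρ₀) M₁) = 5. -/

import Mathlib

open Matrix

/-- The Hadamard gate. -/
noncomputable def Hgate : Matrix (Fin 2) (Fin 2) ℂ :=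
  (↑(Real.sqrt 2))⁻¹ • !![1, 1; 1, -1]

/-- The projection onto `|1⟩`. -/
noncomputable def Mone : Matrix (Fin 2) (Fin 2) ℂ := !![0, 0; 0, 1]

/-- The initial state `|1⟩⟨1|`. -/
noncomputable def rho0 : Matrix (Fin 2) (Fin 2) ℂ := !![0, 0; 0, 1]

/-- One iteration `T(ρ) = H (M₁ ρ M₁) H` of the quantum coin-tossing loop. -/
noncomputable def coinStep (ρ : Matrix (Fin 2) (Fin 2) ℂ) : Matrix (Fin 2) (Fin 2) ℂ :=
  Hgate * (Mone * ρ * Mone) * Hgate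

noncomputable def Amat : Matrix (Fin 2) (Fin 2) ℂ := (2:ℂ)⁻¹ • !![1,-1;-1,1]

lemma hs2 : ((Real.sqrt 2 : ℝ):ℂ) * ((Real.sqrt 2 : ℝ):ℂ) = 2 := by
  rw [← Complex.ofReal_mul]; norm_num

lemma hsne : ((Real.sqrt 2 : ℝ):ℂ) ≠ 0 := by simp

lemma proj_rho0 : Mone * rho0 * Mone = rho0 := by
  ext i j
  fin_cases i <;> fin_cases j <;>
    simp [Mone, rho0, Matrix.mul_apply, Fin.sum_univ_two]

lemma step_rho0 : coinStep rho0 = Amat := by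
  rw [coinStep, proj_rho0]
  ext i j
  fin_cases i <;> fin_cases j <;>
    simp [Hgate, rho0, Amat, Matrix.mul_apply, Fin.sum_univ_two] <;>
    field_simp <;> rw [sq, hs2]

lemma step_smul (c : ℂ) (ρ : Matrix (Fin 2) (Fin 2) ℂ) :
    coinStep (c • ρ) = c • coinStep ρ := by
  simp [coinStep, Matrix.mul_smul, Matrix.smul_mul]

lemma proj_A : Mone * Amat * Mone = (2:ℂ)⁻¹ • rho0 := by
  ext i j
  fin_cases i <;> fin_cases j <;>
    simp [Mone, rho0, Amat, Matrix.mul_apply, Fin.sum_univ_two]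

lemma step_A : coinStep Amat = (2:ℂ)⁻¹ • Amat := by
  rw [coinStep, proj_A, Matrix.mul_smul, Matrix.smul_mul, ← proj_rho0]
  rw [show Hgate * (Mone * rho0 * Mone) * Hgate = coinStep rho0 from rfl, step_rho0]

lemma iter_rho0 (k : ℕ) : coinStep^[k+1] rho0 = ((2:ℂ)⁻¹)^k • Amat := by
  induction k with
  | zero => simp [step_rho0]
  | succ n ih =>
      rw [Function.iterate_succ_apply', ih, step_smul, step_A, smul_smul, pow_succ]

lemma trace_A : Amat.trace = 1 := by
  simp [Amat, Matrix.trace_fin_two]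
  norm_num

lemma trace_MAM : (Mone * Amat * Mone).trace = 2⁻¹ := by
  rw [proj_A]
  simp [rho0, Matrix.trace_fin_two]

lemma cast_pow (k : ℕ) : ((2:ℂ)⁻¹)^k = (((2⁻¹:ℝ)^k : ℝ) : ℂ) := by
  push_cast; ring

/-- The expected runtime of the quantum coin-tossing program `Q_geo` started in `|1⟩` is
`5`: the expected number of measurements plus the expected number of Hadamard
applications. -/
theorem expected_runtime_qgeo :
    Summable (fun k : ℕ => ((coinStep^[k] rho0).trace).re) ∧
    Summable (fun k : ℕ => ((Mone * (coinStep^[k] rho0) * Mone).trace).re) ∧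
    (∑' k : ℕ, ((coinStep^[k] rho0).trace).re)
        + (∑' k : ℕ, ((Mone * (coinStep^[k] rho0) * Mone).trace).re) = 5 := by
  have h1 : ∀ k : ℕ, ((coinStep^[k+1] rho0).trace).re = (2⁻¹:ℝ)^k := by
    intro k
    rw [iter_rho0, Matrix.trace_smul, smul_eq_mul, trace_A, mul_one, cast_pow,
      Complex.ofReal_re]
  have h2 : ∀ k : ℕ, ((Mone * (coinStep^[k+1] rho0) * Mone).trace).re = (2⁻¹:ℝ)^k * 2⁻¹ := by
    intro k
    rw [iter_rho0, Matrix.mul_smul, Matrix.smul_mul, Matrix.trace_smul, smul_eq_mul,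
      trace_MAM, cast_pow]
    rw [show ((2:ℂ))⁻¹ = (((2⁻¹:ℝ)):ℂ) by push_cast; ring, ← Complex.ofReal_mul,
      Complex.ofReal_re]
  have hgeo : Summable (fun k : ℕ => (2⁻¹:ℝ)^k) :=
    summable_geometric_of_lt_one (by norm_num) (by norm_num)
  have hS1 : Summable (fun k : ℕ => ((coinStep^[k] rho0).trace).re) := by
    rw [← summable_nat_add_iff 1]
    exact hgeo.congr (fun k => (h1 k).symm)
  have hS2 : Summable (fun k : ℕ => ((Mone * (coinStep^[k] rho0) * Mone).trace).re) := by
    rw [← summable_nat_add_iff 1]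
    exact (hgeo.mul_right _).congr (fun k => (h2 k).symm)
  refine ⟨hS1, hS2, ?_⟩
  rw [Summable.tsum_eq_zero_add hS1, Summable.tsum_eq_zero_add hS2]
  have e1 : ∑' k : ℕ, ((coinStep^[k+1] rho0).trace).re = 2 := by
    rw [tsum_congr h1, tsum_geometric_of_lt_one (by norm_num) (by norm_num)]
    norm_num
  have e2 : ∑' k : ℕ, ((Mone * (coinStep^[k+1] rho0) * Mone).trace).re = 1 := by
    rw [tsum_congr h2, tsum_mul_right, tsum_geometric_of_lt_one (by norm_num) (by norm_num)]
    norm_num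
  rw [e1, e2]
  simp only [Function.iterate_zero_apply, proj_rho0]
  simp [rho0, Matrix.trace_fin_two]
  norm_num
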